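/- arXiv:2003.06864 — 4 statements merged into one kernel-verified Lean document; each statement's English description precedes it below -/
import Mathlib

section
/- Let K ⊂ ℝ^d be a convex body. Then there are constants τ(K) > 0 and λ(K) > 0 such that for all λ ≥ λ(K) and every lattice L = ρ(ℤ^d + s) with ρ ∈ SO(d), s ∈ ℝ^d: the Hausdorff distance satisfies d_H(λK, (λK)_L) ≤ τ(K). -/
/- Setting: `ℝ^d` with randomized integer lattices `ρ(ℤ^d + t)`, `ρ ∈ SO(d)` Haar
distributed, `t` uniform on `[0,1)^d`. -/

open MeasureTheory Metric Set Matrix Filter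
open scoped Pointwise RealInnerProductSpace ENNReal NNReal

noncomputable section

abbrev Ed (d : ℕ) : Type := EuclideanSpace ℝ (Fin d)

abbrev Mat (d : ℕ) : Type := Matrix (Fin d) (Fin d) ℝ

instance (d : ℕ) : MeasurableSpace (Mat d) :=
  inferInstanceAs (MeasurableSpace (Fin d → Fin d → ℝ))

/-- The set of special orthogonal `d × d` matrices (the rotation group `SO(d)`). -/
def SOd (d : ℕ) : Set (Mat d) := {A | A * Aᵀ = 1 ∧ A.det = 1}

/-- Reinterpret a plain vector as a point of Euclidean space. -/
def toEd (d : ℕ) (v : Fin d → ℝ) : Ed d := WithLp.toLp 2 v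

/-- The rotated and shifted integer lattice `ρ(ℤ^d + t) = {ρ(ω + t) : ω ∈ ℤ^d}`. -/
def lat (d : ℕ) (ρ : Mat d) (t : Ed d) : Set (Ed d) :=
  {x | ∃ ω : Fin d → ℤ, x = toEd d (ρ.mulVec fun j => (ω j : ℝ) + t j)}

/-- The half-open unit cube `[0,1)^d`. -/
def cube (d : ℕ) : Set (Ed d) := {t | ∀ i, 0 ≤ t i ∧ t i < 1}

/-- `μ` is the Haar probability measure on `SO(d)`, viewed as a measure on the
space of `d × d` matrices concentrated on the special orthogonal matrices and
invariant under left translation by rotations. -/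
def IsHaarSO (d : ℕ) (μ : Measure (Mat d)) : Prop :=
  IsProbabilityMeasure μ ∧ μ (SOd d)ᶜ = 0 ∧
    ∀ A ∈ SOd d, ∀ S : Set (Mat d), MeasurableSet S → μ ((A * ·) ⁻¹' S) = μ S

/-- The joint distribution of the parameters `(ρ, t)` of a uniform random lattice:
`ρ` is Haar distributed on `SO(d)` and `t` is uniform on `[0,1)^d`, independently. -/
def latticeParamMeasure (d : ℕ) (μ : Measure (Mat d)) : Measure (Mat d × Ed d) :=
  μ.prod (volume.restrict (cube d))

/-- The probability `P(A ∩ L = ∅)` that a uniform random lattice avoids the set `A`. -/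
def probAvoid (d : ℕ) (μ : Measure (Mat d)) (A : Set (Ed d)) : ℝ≥0∞ :=
  latticeParamMeasure d μ {p | A ∩ lat d p.1 p.2 = ∅}

/-- The support function `h_K(u) = sup {⟨x,u⟩ : x ∈ K}`. -/
def suppFn (d : ℕ) (K : Set (Ed d)) (u : Ed d) : ℝ :=
  sSup ((fun x => ⟪x, u⟫) '' K)

/-- The spherical Lebesgue (surface) measure on the unit sphere `S^{d-1}`. -/
def sphereμ (d : ℕ) : Measure (sphere (0 : Ed d) 1) :=
  (volume : Measure (Ed d)).toSphere

/-- `ω_d`, the total surface measure of the unit sphere. -/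
def ωd (d : ℕ) : ℝ := (sphereμ d univ).toReal

/-- The mean width `W(K) = (2/ω_d) ∫_{S^{d-1}} h_K(u) du`. -/
def meanWidth (d : ℕ) (K : Set (Ed d)) : ℝ :=
  (2 / ωd d) * ∫ u : sphere (0 : Ed d) 1, suppFn d K (↑u) ∂(sphereμ d)

/-- The expected mean width `E[W(K_L)]` of the randomized integer convex hull
`K_L = conv(K ∩ L)` over a uniform random lattice `L`. -/
def expMeanWidthHull (d : ℕ) (μ : Measure (Mat d)) (K : Set (Ed d)) : ℝ :=
  ∫ p, meanWidth d (convexHull ℝ (K ∩ lat d p.1 p.2)) ∂(latticeParamMeasure d μ)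

/-- The cap `K_{t,u} = {x ∈ K : ⟨x,u⟩ ≥ h_K(u) - t}` of `K` of width `t` in direction `u`. -/
def cap (d : ℕ) (K : Set (Ed d)) (t : ℝ) (u : Ed d) : Set (Ed d) :=
  {x ∈ K | suppFn d K u - t ≤ ⟪x, u⟫}

/-- A convex body: a compact convex set with nonempty interior. -/
def IsConvexBody (d : ℕ) (K : Set (Ed d)) : Prop :=
  IsCompact K ∧ Convex ℝ K ∧ (interior K).Nonempty

lemma norm_toEd_mulVec (d : ℕ) (ρ : Mat d) (h : ρ * ρᵀ = 1) (v : Fin d → ℝ) :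
    ‖toEd d (ρ.mulVec v)‖ = ‖toEd d v‖ := by
  have key : (ρ.mulVec v) ⬝ᵥ (ρ.mulVec v) = v ⬝ᵥ v := by
    rw [Matrix.dotProduct_mulVec, ← Matrix.mulVec_transpose, Matrix.mulVec_mulVec,
      mul_eq_one_comm.mp h, Matrix.one_mulVec]
  have e : ∀ w : Fin d → ℝ, ‖toEd d w‖ = Real.sqrt (w ⬝ᵥ w) := by
    intro w
    rw [EuclideanSpace.norm_eq]
    congr 1
    simp [dotProduct, toEd, Real.norm_eq_abs, sq_abs, pow_two]
  rw [e, e, key]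

lemma lat_near (d : ℕ) (ρ : Mat d) (hρ : ρ ∈ SOd d) (s : Ed d) (z : Ed d) :
    ∃ p ∈ lat d ρ s, dist p z ≤ Real.sqrt d / 2 := by
  set y : Fin d → ℝ := ρᵀ.mulVec z with hy
  set ω : Fin d → ℤ := fun i => round (y i - s i) with hω
  refine ⟨toEd d (ρ.mulVec fun j => (ω j : ℝ) + s j), ⟨ω, rfl⟩, ?_⟩
  have hz : z = toEd d (ρ.mulVec y) := by
    show z = WithLp.toLp 2 (ρ.mulVec (ρᵀ.mulVec z.ofLp))
    rw [Matrix.mulVec_mulVec, hρ.1, Matrix.one_mulVec, WithLp.toLp_ofLp]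
  rw [dist_eq_norm]
  have hsub : toEd d (ρ.mulVec fun j => (ω j : ℝ) + s j) - z
      = toEd d (ρ.mulVec ((fun j => (ω j : ℝ) + s j) - y)) := by
    rw [hz]
    rw [Matrix.mulVec_sub, toEd, toEd, toEd, WithLp.toLp_sub]
  rw [hsub, norm_toEd_mulVec d ρ hρ.1]
  have hb : ∀ j, |((fun j => (ω j : ℝ) + s j) - y) j| ≤ 1/2 := by
    intro j
    have h1 := abs_sub_round (y j - s j)
    have h2 : ((fun j => (ω j : ℝ) + s j) - y) j = -(y j - s j - round (y j - s j)) := by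
      simp [hω]; ring
    rw [h2, abs_neg]
    exact h1
  have hsum : ∑ i, ‖((fun j => (ω j : ℝ) + s j) - y) i‖ ^ 2 ≤ (d : ℝ) / 4 := by
    calc ∑ i, ‖((fun j => (ω j : ℝ) + s j) - y) i‖ ^ 2
        ≤ ∑ _i : Fin d, ((1:ℝ)/2) ^ 2 := by
          apply Finset.sum_le_sum
          intro i _
          have := hb i
          rw [Real.norm_eq_abs]
          nlinarith [abs_nonneg (((fun j => (ω j : ℝ) + s j) - y) i)]
      _ = (d : ℝ) / 4 := by simp; ring
  have h4 : Real.sqrt ((d : ℝ) / 4) = Real.sqrt d / 2 := by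
    rw [show ((d:ℝ)/4) = (d:ℝ) / 2^2 by ring, Real.sqrt_div (by positivity),
      Real.sqrt_sq (by norm_num)]
  calc ‖toEd d ((fun j => (ω j : ℝ) + s j) - y)‖
      = Real.sqrt (∑ i, ‖((fun j => (ω j : ℝ) + s j) - y) i‖ ^ 2) := EuclideanSpace.norm_eq (toEd d ((fun j => (ω j : ℝ) + s j) - y))
    _ ≤ Real.sqrt ((d : ℝ) / 4) := Real.sqrt_le_sqrt hsum
    _ = Real.sqrt d / 2 := h4

/-- **Theorem (Hausdorff distance bound).** For a convex body `K ⊆ ℝ^d` there are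
`τ(K), λ(K) > 0` such that `d_H(λK, (λK)_L) ≤ τ(K)` for all `λ ≥ λ(K)` and every lattice
`L = ρ(ℤ^d + s)`, where `d_H(K,Q) = max_u |h_K(u) - h_Q(u)|`. -/
theorem hausdorff_distance_hull_bounded (d : ℕ) (hd : 2 ≤ d)
    (K : Set (Ed d)) (hK : IsConvexBody d K) :
    ∃ τ lam₀ : ℝ, 0 < τ ∧ 0 < lam₀ ∧
      ∀ l : ℝ, lam₀ ≤ l →
        ∀ ρ ∈ SOd d, ∀ s : Ed d,
          ∀ u : Ed d, ‖u‖ = 1 →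
            |suppFn d (l • K) u -
                suppFn d (convexHull ℝ ((l • K) ∩ lat d ρ s)) u| ≤ τ := by
  obtain ⟨hKc, hKconv, c, hcint⟩ := hK
  have hcK : c ∈ K := interior_subset hcint
  obtain ⟨r, hr0, hball⟩ := Metric.isOpen_iff.mp isOpen_interior c hcint
  have hballK : ball c r ⊆ K := hball.trans interior_subset
  obtain ⟨R0, hR0⟩ := hKc.isBounded.subset_closedBall c
  set R := max R0 0 with hR
  have hRK : ∀ x ∈ K, ‖x - c‖ ≤ R := by
    intro x hx
    have := hR0 hx
    rw [mem_closedBall, dist_eq_norm] at this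
    exact this.trans (le_max_left _ _)
  have hR0' : (0:ℝ) ≤ R := le_max_right _ _
  have hd0 : (0:ℝ) < d := by
    have : (2:ℝ) ≤ d := by exact_mod_cast hd
    linarith
  set sd := Real.sqrt d with hsd_def
  have hsd : 0 < sd := Real.sqrt_pos.mpr hd0
  refine ⟨sd * (R / r + 1), sd / r, by positivity, by positivity, ?_⟩
  intro l hl ρ hρ s u hu
  have hl0 : 0 < l := lt_of_lt_of_le (by positivity) hl
  have hlr : sd ≤ l * r := by
    have := (div_le_iff₀ hr0).mp hl
    linarith
  set θ := sd / (l * r) with hθ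
  have hθ0 : 0 < θ := by positivity
  have hθ1 : θ ≤ 1 := (div_le_one (by positivity)).mpr hlr
  have hlθ : l * θ = sd / r := by
    rw [hθ]; field_simp
  have hKne : K.Nonempty := ⟨c, hcK⟩
  have hcont : Continuous fun v : Ed d => ⟪v, u⟫ :=
    Continuous.inner continuous_id continuous_const
  obtain ⟨x, hxK, hxmax⟩ := hKc.exists_isMaxOn hKne hcont.continuousOn
  have hgreat : IsGreatest ((fun v : Ed d => ⟪v, u⟫) '' (l • K)) (l * ⟪x, u⟫) := by
    constructor
    · exact ⟨l • x, smul_mem_smul_set hxK, real_inner_smul_left x u l⟩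
    · rintro a ⟨v, hv, rfl⟩
      obtain ⟨w, hwK, rfl⟩ := hv
      show ⟪l • w, u⟫ ≤ l * ⟪x, u⟫
      rw [real_inner_smul_left]
      exact mul_le_mul_of_nonneg_left (hxmax hwK) hl0.le
  have hsupp : suppFn d (l • K) u = l * ⟪x, u⟫ := hgreat.csSup_eq
  set q : Ed d := l • ((1 - θ) • x + θ • c) with hq
  have hball' : ∀ w : Ed d, dist w q ≤ sd / 2 → w ∈ l • K := by
    intro w hw
    set v : Ed d := w - q with hv
    have hnv : ‖v‖ ≤ sd / 2 := by rw [hv, ← dist_eq_norm]; exact hw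
    have hk : c + (r / sd) • v ∈ K := by
      apply hballK
      rw [mem_ball, dist_eq_norm]
      have : c + (r / sd) • v - c = (r / sd) • v := by abel
      rw [this, norm_smul, Real.norm_eq_abs, abs_of_nonneg (by positivity)]
      calc r / sd * ‖v‖ ≤ r / sd * (sd / 2) := by
            apply mul_le_mul_of_nonneg_left hnv (by positivity)
        _ = r / 2 := by field_simp
        _ < r := by linarith
    have hcomb : (1 - θ) • x + θ • (c + (r / sd) • v) ∈ K :=
      hKconv hxK hk (by linarith) hθ0.le (by ring)
    refine Set.mem_smul_set.mpr ⟨_, hcomb, ?_⟩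
    have e1 : l • ((1 - θ) • x + θ • (c + (r / sd) • v))
        = q + (l * (θ * (r / sd))) • v := by
      rw [hq]
      module
    have e2 : l * (θ * (r / sd)) = 1 := by
      rw [← mul_assoc, hlθ]
      field_simp
    rw [e1, e2, one_smul, hv]
    abel
  obtain ⟨p, hplat, hpq⟩ := lat_near d ρ hρ s q
  have hpK : p ∈ l • K := hball' p hpq
  have hpS : p ∈ (l • K) ∩ lat d ρ s := ⟨hpK, hplat⟩
  have hqp : ⟪q, u⟫ - ⟪p, u⟫ ≤ sd / 2 := by
    have h1 : ⟪q - p, u⟫ ≤ ‖q - p‖ * ‖u‖ := real_inner_le_norm _ _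
    rw [hu, mul_one, inner_sub_left] at h1
    have hn : ‖q - p‖ ≤ sd / 2 := by
      rw [← dist_eq_norm, dist_comm]
      exact hpq
    linarith [real_inner_le_norm (q - p) u]
  have hqu : l * ⟪x, u⟫ - ⟪q, u⟫ ≤ sd / r * R := by
    have hxc : ⟪x - c, u⟫ ≤ R := by
      have h1 : ⟪x - c, u⟫ ≤ ‖x - c‖ * ‖u‖ := real_inner_le_norm _ _
      rw [hu, mul_one] at h1
      exact h1.trans (hRK x hxK)
    have hqeq : ⟪q, u⟫ = l * ⟪x, u⟫ - (l * θ) * ⟪x - c, u⟫ := by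
      rw [hq]
      simp only [inner_add_left, real_inner_smul_left, inner_sub_left]
      ring
    rw [hqeq, hlθ]
    have h2 : sd / r * ⟪x - c, u⟫ ≤ sd / r * R :=
      mul_le_mul_of_nonneg_left hxc (by positivity)
    linarith
  set S := (l • K) ∩ lat d ρ s with hS
  have hHsub : convexHull ℝ S ⊆ l • K := convexHull_min inter_subset_left (hKconv.smul l)
  have hbdd : BddAbove ((fun v : Ed d => ⟪v, u⟫) '' (l • K)) := ⟨_, hgreat.2⟩
  have himg : (fun v : Ed d => ⟪v, u⟫) '' (convexHull ℝ S) ⊆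
      (fun v : Ed d => ⟪v, u⟫) '' (l • K) := image_mono hHsub
  have hpH : p ∈ convexHull ℝ S := subset_convexHull ℝ S hpS
  have hub : suppFn d (convexHull ℝ S) u ≤ suppFn d (l • K) u :=
    csSup_le_csSup hbdd ⟨_, ⟨p, hpH, rfl⟩⟩ himg
  have hlb : ⟪p, u⟫ ≤ suppFn d (convexHull ℝ S) u :=
    le_csSup (hbdd.mono himg) ⟨p, hpH, rfl⟩
  rw [hsupp] at hub ⊢
  have hnn : 0 ≤ l * ⟪x, u⟫ - suppFn d (convexHull ℝ S) u := by linarith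
  rw [abs_of_nonneg hnn]
  have hring : sd / r * R = sd * (R / r) := by ring
  nlinarith [hsd.le]

end
end

section
/- Let K ⊂ ℝ^d be a convex body. Then there are constants τ(K) > 0 and λ(K) > 0 such that for all λ ≥ λ(K): W(λK) − E[W((λK)_L)] ≤ 2τ(K), where the expectation is over a uniform random lattice L, and moreover the bound W(λK) − W((λK)_L) ≤ 2τ(K) holds for every individual lattice L = ρ(ℤ^d + s). -/
/- Setting: `ℝ^d` with randomized integer lattices `ρ(ℤ^d + t)`, `ρ ∈ SO(d)` Haar
distributed, `t` uniform on `[0,1)^d`. -/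

open MeasureTheory Metric Set Matrix Filter
open scoped Pointwise RealInnerProductSpace ENNReal NNReal

noncomputable section

section Test
variable {d : ℕ}

lemma inner_toEd (x y : Fin d → ℝ) : ⟪toEd d x, toEd d y⟫ = x ⬝ᵥ y := by
  simp [toEd, PiLp.inner_apply, dotProduct, mul_comm]

lemma inner_mulVec_SOd {A : Mat d} (hA : A ∈ SOd d) (v w : Fin d → ℝ) :
    ⟪toEd d (A.mulVec v), toEd d (A.mulVec w)⟫ = ⟪toEd d v, toEd d w⟫ := by
  rw [inner_toEd, inner_toEd, Matrix.dotProduct_mulVec, Matrix.vecMul_mulVec,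
    mul_eq_one_comm.mp hA.1, Matrix.vecMul_one]

lemma norm_mulVec_SOd {A : Mat d} (hA : A ∈ SOd d) (v : Fin d → ℝ) :
    ‖toEd d (A.mulVec v)‖ = ‖toEd d v‖ := by
  have := inner_mulVec_SOd hA v v
  rw [real_inner_self_eq_norm_sq, real_inner_self_eq_norm_sq] at this
  nlinarith [norm_nonneg (toEd d (A.mulVec v)), norm_nonneg (toEd d v)]

/-- Covering radius: every point of `ℝ^d` is within `√d/2` of the lattice. -/
lemma lat_cover {ρ : Mat d} (hρ : ρ ∈ SOd d) (t : Ed d) (c : Ed d) :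
    ∃ z ∈ lat d ρ t, dist z c ≤ Real.sqrt d / 2 := by
  classical
  set y : Fin d → ℝ := ρᵀ.mulVec c with hy
  set ω : Fin d → ℤ := fun j => round (y j - t j) with hω
  refine ⟨toEd d (ρ.mulVec fun j => (ω j : ℝ) + t j), ⟨ω, rfl⟩, ?_⟩
  have hc : c = toEd d (ρ.mulVec y) := by
    simp only [hy, Matrix.mulVec_mulVec, hρ.1, Matrix.one_mulVec]
    rfl
  have hsub : toEd d (ρ.mulVec fun j => (ω j : ℝ) + t j) - c
      = toEd d (ρ.mulVec fun j => ((ω j : ℝ) + t j) - y j) := by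
    rw [hc]
    have : (fun j => ((ω j : ℝ) + t j) - y j)
        = (fun j => (ω j : ℝ) + t j) - y := by funext j; rfl
    rw [this, Matrix.mulVec_sub]
    rfl
  rw [dist_eq_norm, hsub, norm_mulVec_SOd hρ]
  have hb : ∀ j, |((ω j : ℝ) + t j) - y j| ≤ 1 / 2 := by
    intro j
    have h := abs_sub_round (y j - t j)
    rw [hω]
    rw [abs_sub_comm] at h
    convert h using 2
    · rfl
    · rfl
    · rfl
    ring
  have h1 : ‖toEd d fun j => ((ω j : ℝ) + t j) - y j‖
      ≤ Real.sqrt (∑ _j : Fin d, (1/2 : ℝ)^2) := by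
    rw [EuclideanSpace.norm_eq]
    apply Real.sqrt_le_sqrt
    apply Finset.sum_le_sum
    intro j _
    have h2 : ‖((ω j : ℝ) + t j) - y j‖ ≤ 1/2 := hb j
    show ‖((ω j : ℝ) + t j) - y j‖^2 ≤ (1/2:ℝ)^2
    nlinarith [norm_nonneg (((ω j : ℝ) + t j) - y j)]
  refine h1.trans (le_of_eq ?_)
  rw [Finset.sum_const, Finset.card_univ, Fintype.card_fin]
  rw [show d • ((1/2:ℝ)^2) = (d : ℝ) * (1/4) by rw [nsmul_eq_mul]; ring]
  rw [Real.sqrt_mul (by positivity), show (1/4:ℝ) = (1/2)^2 by norm_num,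
    Real.sqrt_sq (by norm_num)]
  ring

end Test
section Supp
variable {d : ℕ} {S T : Set (Ed d)} {M : ℝ} {u : Ed d}

lemma bddAbove_inner_image (hS : S ⊆ closedBall 0 M) :
    BddAbove ((fun x => ⟪x, u⟫) '' S) := by
  refine ⟨M * ‖u‖, ?_⟩
  rintro - ⟨x, hx, rfl⟩
  have h1 : ‖x‖ ≤ M := by simpa [dist_eq_norm] using hS hx
  calc ⟪x, u⟫ ≤ ‖x‖ * ‖u‖ := real_inner_le_norm x u
    _ ≤ M * ‖u‖ := by have := norm_nonneg u; nlinarith [norm_nonneg x]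

lemma le_suppFn (hS : S ⊆ closedBall 0 M) {x : Ed d} (hx : x ∈ S) :
    ⟪x, u⟫ ≤ suppFn d S u :=
  le_csSup (bddAbove_inner_image hS) ⟨x, hx, rfl⟩

lemma suppFn_le (hS : S.Nonempty) {b : ℝ} (hb : ∀ x ∈ S, ⟪x, u⟫ ≤ b) :
    suppFn d S u ≤ b := by
  apply csSup_le (hS.image _)
  rintro - ⟨x, hx, rfl⟩
  exact hb x hx

lemma suppFn_mono (hS : S.Nonempty) (hST : S ⊆ T) (hT : T ⊆ closedBall 0 M) :
    suppFn d S u ≤ suppFn d T u :=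
  suppFn_le hS fun x hx => le_suppFn hT (hST hx)

lemma suppFn_abs_le (hS : S.Nonempty) (hSM : S ⊆ closedBall 0 M)
    (hu : ‖u‖ = 1) : |suppFn d S u| ≤ M := by
  obtain ⟨x, hx⟩ := hS
  have hM : ‖x‖ ≤ M := by simpa [dist_eq_norm] using hSM hx
  rw [abs_le]
  constructor
  · have h1 : ⟪x, u⟫ ≤ suppFn d S u := le_suppFn hSM hx
    have h2 : -(‖x‖ * ‖u‖) ≤ ⟪x, u⟫ := neg_le_of_neg_le (by
      simpa using real_inner_le_norm (-x) u)
    rw [hu] at h2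
    linarith
  · apply suppFn_le ⟨x, hx⟩
    intro z hz
    have h1 : ‖z‖ ≤ M := by simpa [dist_eq_norm] using hSM hz
    calc ⟪z, u⟫ ≤ ‖z‖ * ‖u‖ := real_inner_le_norm z u
      _ ≤ M := by rw [hu]; linarith

lemma suppFn_convexHull (hS : S.Nonempty) (hSM : S ⊆ closedBall 0 M) :
    suppFn d (convexHull ℝ S) u = suppFn d S u := by
  have hhull : convexHull ℝ S ⊆ closedBall 0 M :=
    convexHull_min hSM (convex_closedBall 0 M)
  apply le_antisymm
  · apply suppFn_le (hS.mono (subset_convexHull ℝ S))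
    intro x hx
    have hcv : convexHull ℝ S ⊆ {w | ⟪w, u⟫ ≤ suppFn d S u} := by
      apply convexHull_min (fun z hz => le_suppFn hSM hz)
      have : Convex ℝ {w : Ed d | ⟪w, u⟫ ≤ suppFn d S u} := by
        intro a ha b hb p q hp hq hpq
        simp only [mem_setOf_eq] at ha hb ⊢
        rw [inner_add_left, real_inner_smul_left, real_inner_smul_left]
        have hsum : p * ⟪a, u⟫ + q * ⟪b, u⟫ ≤ (p + q) * suppFn d S u := by
          have h5 := add_le_add (mul_le_mul_of_nonneg_left ha hp)
            (mul_le_mul_of_nonneg_left hb hq)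
          nlinarith [h5]
        rw [hpq, one_mul] at hsum
        exact hsum
      exact this
    exact hcv hx
  · exact suppFn_mono hS (subset_convexHull ℝ S) hhull

lemma suppFn_lipschitz (hS : S.Nonempty) (hSM : S ⊆ closedBall 0 M) :
    ∀ v w : Ed d, suppFn d S v ≤ suppFn d S w + M * ‖v - w‖ := by
  intro v w
  apply suppFn_le hS
  intro x hx
  have h1 : ‖x‖ ≤ M := by simpa [dist_eq_norm] using hSM hx
  have h2 : ⟪x, v⟫ = ⟪x, w⟫ + ⟪x, v - w⟫ := by
    rw [← inner_add_right]
    congr 1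
    abel
  have h3 : ⟪x, v - w⟫ ≤ M * ‖v - w‖ := by
    calc ⟪x, v - w⟫ ≤ ‖x‖ * ‖v - w‖ := real_inner_le_norm _ _
      _ ≤ M * ‖v - w‖ := by nlinarith [norm_nonneg (v - w), norm_nonneg x]
  have h4 : ⟪x, w⟫ ≤ suppFn d S w := le_suppFn hSM hx
  linarith

lemma suppFn_continuous (hS : S.Nonempty) (hSM : S ⊆ closedBall 0 M) :
    Continuous (suppFn d S) := by
  have hM : 0 ≤ M := by
    obtain ⟨x, hx⟩ := hS
    have := hSM hx
    simp only [mem_closedBall, dist_zero_right] at this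
    linarith [norm_nonneg x]
  have : LipschitzWith (Real.toNNReal M) (suppFn d S) := by
    apply LipschitzWith.of_dist_le_mul
    intro v w
    rw [Real.dist_eq, abs_le]
    have h1 := suppFn_lipschitz hS hSM v w
    have h2 := suppFn_lipschitz hS hSM w v
    have h3 : ‖w - v‖ = ‖v - w‖ := norm_sub_rev w v
    rw [h3] at h2
    have h4 : ((Real.toNNReal M : ℝ≥0) : ℝ) = M := Real.coe_toNNReal M hM
    rw [h4, dist_eq_norm]
    constructor <;> linarith
  exact this.continuous

end Supp
section Geom
variable {d : ℕ} {K : Set (Ed d)} {x₀ : Ed d} {R r l : ℝ}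

lemma scaled_subset (hKR : K ⊆ closedBall 0 R) (hl0 : 0 < l) :
    l • K ⊆ closedBall 0 (l * R) := by
  rintro - ⟨k, hk, rfl⟩
  have : ‖k‖ ≤ R := by simpa [dist_eq_norm] using hKR hk
  simp only [mem_closedBall, dist_zero_right, norm_smul, Real.norm_eq_abs,
    abs_of_pos hl0]
  nlinarith

lemma scaled_ball (hball : closedBall x₀ r ⊆ K) (hl0 : 0 < l) :
    closedBall (l • x₀) (l * r) ⊆ l • K := by
  intro z hz
  refine ⟨l⁻¹ • z, hball ?_, by show l • (l⁻¹ • z) = z; rw [smul_smul, mul_inv_cancel₀ hl0.ne', one_smul]⟩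
  simp only [mem_closedBall, dist_eq_norm] at hz ⊢
  have : l⁻¹ • z - x₀ = l⁻¹ • (z - l • x₀) := by
    rw [smul_sub, smul_smul, inv_mul_cancel₀ hl0.ne', one_smul]
  rw [this, norm_smul, Real.norm_eq_abs, abs_of_pos (by positivity)]
  rw [← mul_le_mul_iff_right₀ hl0, ← mul_assoc, mul_inv_cancel₀ hl0.ne', one_mul]
  exact hz

lemma lat_inter_nonempty (hd : 2 ≤ d) {ρ : Mat d} (hρ : ρ ∈ SOd d) (s : Ed d)
    (hball : closedBall x₀ r ⊆ K) (hr : 0 < r) (hl : Real.sqrt d / r ≤ l) :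
    ((l • K) ∩ lat d ρ s).Nonempty := by
  have hd0 : (0:ℝ) < Real.sqrt d := Real.sqrt_pos.mpr (by positivity)
  have hl0 : 0 < l := lt_of_lt_of_le (by positivity) hl
  obtain ⟨z, hzl, hzd⟩ := lat_cover hρ s (l • x₀)
  refine ⟨z, scaled_ball hball hl0 ?_, hzl⟩
  have hlr : Real.sqrt d ≤ l * r := by
    rw [div_le_iff₀ hr] at hl; nlinarith
  simp only [mem_closedBall]
  calc dist z (l • x₀) ≤ Real.sqrt d / 2 := hzd
    _ ≤ l * r := by linarith

/-- The key per-direction estimate. -/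
lemma suppFn_key (hd : 2 ≤ d) {ρ : Mat d} (hρ : ρ ∈ SOd d) (s : Ed d)
    (hKconv : Convex ℝ K) (hKR : K ⊆ closedBall 0 R)
    (hball : closedBall x₀ r ⊆ K) (hr : 0 < r) (hR : 0 < R)
    (hl : Real.sqrt d / r ≤ l) {u : Ed d} (hu : ‖u‖ = 1) :
    suppFn d (l • K) u ≤ suppFn d ((l • K) ∩ lat d ρ s) u
      + (Real.sqrt d * R / r + Real.sqrt d / 2) := by
  have hd0 : (0:ℝ) < Real.sqrt d := Real.sqrt_pos.mpr (by positivity)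
  have hl0 : 0 < l := lt_of_lt_of_le (by positivity) hl
  set S := (l • K) ∩ lat d ρ s with hSdef
  have hSsub : S ⊆ closedBall 0 (l * R) :=
    (inter_subset_left).trans (scaled_subset hKR hl0)
  have hlKsub : l • K ⊆ closedBall 0 (l * R) := scaled_subset hKR hl0
  have hlKne : (l • K).Nonempty := by
    refine ⟨l • x₀, x₀, hball (mem_closedBall_self hr.le), rfl⟩
  apply le_of_forall_pos_le_add
  intro δ hδ
  -- pick a near-maximizer x ∈ l•K
  have himne : ((fun x => ⟪x, u⟫) '' (l • K)).Nonempty := hlKne.image _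
  have hlt : suppFn d (l • K) u - δ < sSup ((fun x => ⟪x, u⟫) '' (l • K)) := by
    have : suppFn d (l • K) u - δ < suppFn d (l • K) u := by linarith
    exact this
  obtain ⟨-, ⟨x, hxK, rfl⟩, hxgt⟩ := exists_lt_of_lt_csSup himne hlt
  set ε : ℝ := Real.sqrt d / (2 * l * r) with hεdef
  have hε0 : 0 < ε := by positivity
  have hlr : Real.sqrt d ≤ l * r := by
    rw [div_le_iff₀ hr] at hl; nlinarith
  have hε1 : ε ≤ 1 := by
    rw [hεdef, div_le_one (by positivity)]; nlinarith
  have hεlr : ε * (l * r) = Real.sqrt d / 2 := by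
    rw [hεdef]; field_simp
  set y := (1 - ε) • x + (ε * l) • x₀ with hydef
  -- the ball of radius √d/2 around y is inside l•K
  have hyball : closedBall y (Real.sqrt d / 2) ⊆ l • K := by
    intro w hw
    set v := l • x₀ + ε⁻¹ • (w - y) with hvdef
    have hv : v ∈ closedBall (l • x₀) (l * r) := by
      simp only [mem_closedBall, dist_eq_norm, hvdef, add_sub_cancel_left]
      rw [norm_smul, Real.norm_eq_abs, abs_of_pos (by positivity)]
      have hwy : ‖w - y‖ ≤ Real.sqrt d / 2 := by
        simpa [dist_eq_norm] using hw
      calc ε⁻¹ * ‖w - y‖ ≤ ε⁻¹ * (Real.sqrt d / 2) := by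
            apply mul_le_mul_of_nonneg_left hwy (by positivity)
        _ = ε⁻¹ * (ε * (l * r)) := by rw [hεlr]
        _ = l * r := by field_simp
    have hvK : v ∈ l • K := scaled_ball hball hl0 hv
    have hcomb : w = (1 - ε) • x + ε • v := by
      rw [hvdef, hydef]
      rw [smul_add, smul_smul, smul_smul, mul_inv_cancel₀ hε0.ne', one_smul]
      abel_nf
    rw [hcomb]
    exact (hKconv.smul l) hxK hvK (by linarith) hε0.le (by ring)
  -- find a lattice point near y
  obtain ⟨z, hzl, hzd⟩ := lat_cover hρ s y
  have hzK : z ∈ l • K := hyball (by simpa [mem_closedBall] using hzd)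
  have hzS : z ∈ S := ⟨hzK, hzl⟩
  -- estimate
  have h1 : ⟪z, u⟫ ≤ suppFn d S u := le_suppFn hSsub hzS
  have h2 : ⟪y, u⟫ - ⟪z, u⟫ ≤ Real.sqrt d / 2 := by
    have := real_inner_le_norm (y - z) u
    rw [inner_sub_left, hu, mul_one] at this
    have hn : ‖y - z‖ ≤ Real.sqrt d / 2 := by
      rw [← dist_eq_norm, dist_comm]; exact hzd
    linarith
  have h3 : ⟪y, u⟫ = (1 - ε) * ⟪x, u⟫ + (ε * l) * ⟪x₀, u⟫ := by
    rw [hydef, inner_add_left, real_inner_smul_left, real_inner_smul_left]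
  have hxle : ⟪x, u⟫ ≤ l * R := by
    have hb := hlKsub hxK
    simp only [mem_closedBall, dist_zero_right] at hb
    calc ⟪x, u⟫ ≤ ‖x‖ * ‖u‖ := real_inner_le_norm _ _
      _ ≤ l * R := by rw [hu]; linarith
  have hx0ge : -R ≤ ⟪x₀, u⟫ := by
    have hb : ‖x₀‖ ≤ R := by
      have := hKR (hball (mem_closedBall_self hr.le))
      simpa [dist_eq_norm] using this
    have := real_inner_le_norm (-x₀) u
    rw [inner_neg_left, norm_neg, hu, mul_one] at this
    linarith
  have heps : ε * l = Real.sqrt d / (2 * r) := by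
    rw [hεdef]; field_simp
  have h2eps : 2 * (ε * l * R) = Real.sqrt d * R / r := by
    rw [show ε * l * R = (ε * l) * R by ring, heps]; field_simp
  have e1 : ε * ⟪x, u⟫ ≤ ε * (l * R) := mul_le_mul_of_nonneg_left hxle hε0.le
  have e2 : (ε * l) * (-R) ≤ (ε * l) * ⟪x₀, u⟫ :=
    mul_le_mul_of_nonneg_left hx0ge (by positivity)
  have e3 : ε * (suppFn d (l • K) u - δ) ≤ ε * ⟪x, u⟫ :=
    mul_le_mul_of_nonneg_left hxgt.le hε0.le
  nlinarith [e1, e2, e3, h1, h2, h3, hxgt]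
end Geom
section MW
variable {d : ℕ} {K S : Set (Ed d)} {x₀ : Ed d} {R r l M : ℝ}

instance (d : ℕ) : IsFiniteMeasure (sphereμ d) := by
  unfold sphereμ; infer_instance

lemma ωd_pos (hd : 1 ≤ d) : 0 < ωd d := by
  have h1 : sphereμ d univ = (d : ℝ≥0∞) * volume (ball (0 : Ed d) 1) := by
    rw [sphereμ, Measure.toSphere_apply_univ]
    congr
    · simp [finrank_euclideanSpace]
  rw [ωd, h1]
  apply ENNReal.toReal_pos
  · apply mul_ne_zero
    · simpa using (by omega : d ≠ 0)
    · exact (measure_ball_pos volume (0 : Ed d) one_pos).ne'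
  · exact ENNReal.mul_ne_top (ENNReal.natCast_ne_top d) measure_ball_lt_top.ne

lemma suppFn_integrable (hS : S.Nonempty) (hSM : S ⊆ closedBall 0 M) :
    Integrable (fun u : sphere (0 : Ed d) 1 => suppFn d S ↑u) (sphereμ d) := by
  apply Integrable.mono' (integrable_const M)
  · exact ((suppFn_continuous hS hSM).comp continuous_subtype_val).aestronglyMeasurable
  · apply ae_of_all
    intro u
    exact suppFn_abs_le hS hSM (mem_sphere_zero_iff_norm.mp u.2)

lemma meanWidth_convexHull (hS : S.Nonempty) (hSM : S ⊆ closedBall 0 M) :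
    meanWidth d (convexHull ℝ S) = meanWidth d S := by
  unfold meanWidth
  congr 1
  apply integral_congr_ae
  apply ae_of_all
  intro u
  exact suppFn_convexHull hS hSM

/-- The individual-lattice mean width bound. -/
lemma meanWidth_diff (hd : 2 ≤ d) {ρ : Mat d} (hρ : ρ ∈ SOd d) (s : Ed d)
    (hKconv : Convex ℝ K) (hKR : K ⊆ closedBall 0 R)
    (hball : closedBall x₀ r ⊆ K) (hr : 0 < r) (hR : 0 < R)
    (hl : Real.sqrt d / r ≤ l) :
    meanWidth d (l • K) - meanWidth d (convexHull ℝ ((l • K) ∩ lat d ρ s))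
      ≤ 2 * (Real.sqrt d * R / r + Real.sqrt d / 2) := by
  have hd0 : (0:ℝ) < Real.sqrt d := Real.sqrt_pos.mpr (by positivity)
  have hl0 : 0 < l := lt_of_lt_of_le (by positivity) hl
  set τ := Real.sqrt d * R / r + Real.sqrt d / 2 with hτ
  set S := (l • K) ∩ lat d ρ s with hSdef
  have hSne : S.Nonempty := lat_inter_nonempty hd hρ s hball hr hl
  have hSsub : S ⊆ closedBall 0 (l * R) :=
    (inter_subset_left).trans (scaled_subset hKR hl0)
  have hlKsub : l • K ⊆ closedBall 0 (l * R) := scaled_subset hKR hl0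
  have hlKne : (l • K).Nonempty :=
    ⟨l • x₀, x₀, hball (mem_closedBall_self hr.le), rfl⟩
  rw [meanWidth_convexHull hSne hSsub]
  have hint1 := suppFn_integrable hlKne hlKsub
  have hint2 := suppFn_integrable hSne hSsub
  have hω : 0 < ωd d := ωd_pos (by omega)
  unfold meanWidth
  rw [← mul_sub, ← integral_sub hint1 hint2]
  have hptwise : ∀ u : sphere (0 : Ed d) 1,
      suppFn d (l • K) ↑u - suppFn d S ↑u ≤ τ := by
    intro u
    have := suppFn_key hd hρ s hKconv hKR hball hr hR hl
      (mem_sphere_zero_iff_norm.mp u.2)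
    rw [← hSdef, ← hτ] at this
    linarith
  have hile : (∫ u : sphere (0 : Ed d) 1,
      (suppFn d (l • K) ↑u - suppFn d S ↑u) ∂(sphereμ d)) ≤ τ * ωd d := by
    calc (∫ u : sphere (0 : Ed d) 1,
        (suppFn d (l • K) ↑u - suppFn d S ↑u) ∂(sphereμ d))
        ≤ ∫ _u : sphere (0 : Ed d) 1, τ ∂(sphereμ d) := by
          apply integral_mono (hint1.sub hint2) (integrable_const τ)
          intro u
          exact hptwise u
      _ = τ * ωd d := by
          rw [integral_const, smul_eq_mul, ωd, measureReal_def]; ring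
  calc (2 / ωd d) * (∫ u : sphere (0 : Ed d) 1,
      (suppFn d (l • K) ↑u - suppFn d S ↑u) ∂(sphereμ d))
      ≤ (2 / ωd d) * (τ * ωd d) := by
        apply mul_le_mul_of_nonneg_left hile (by positivity)
    _ = 2 * τ := by field_simp
end MW
section Meas
variable {d : ℕ} {K : Set (Ed d)} {x₀ : Ed d} {R r l : ℝ}

instance (d : ℕ) : OpensMeasurableSpace (Mat d) :=
  inferInstanceAs (OpensMeasurableSpace (Fin d → Fin d → ℝ))

/-- The lattice point map, as a function of the parameters. -/
def Xpt (d : ℕ) (ω : Fin d → ℤ) (p : Mat d × Ed d) : Ed d :=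
  toEd d (p.1.mulVec fun j => (ω j : ℝ) + p.2 j)

lemma continuous_Xpt (ω : Fin d → ℤ) : Continuous (Xpt d ω) := by
  have h1 : Continuous (fun p : Mat d × Ed d =>
      p.1.mulVec fun j => (ω j : ℝ) + p.2 j) := by
    apply Continuous.matrix_mulVec continuous_fst
    apply continuous_pi
    intro j
    exact continuous_const.add
      (((continuous_apply j).comp
        (EuclideanSpace.equiv (Fin d) ℝ).continuous).comp continuous_snd)
  exact ((EuclideanSpace.equiv (Fin d) ℝ).symm.continuous).comp h1

lemma Xpt_mem_lat (ω : Fin d → ℤ) (p : Mat d × Ed d) :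
    Xpt d ω p ∈ lat d p.1 p.2 := ⟨ω, rfl⟩

open scoped Classical in
/-- Approximating family for the support function of the lattice hull. -/
def fA (d : ℕ) (l R : ℝ) (K : Set (Ed d)) (ω : Fin d → ℤ)
    (q : (Mat d × Ed d) × Ed d) : ℝ :=
  if Xpt d ω q.1 ∈ l • K then ⟪Xpt d ω q.1, q.2⟫ else -(l * R)

def GA (d : ℕ) (l R : ℝ) (K : Set (Ed d)) (q : (Mat d × Ed d) × Ed d) : ℝ :=
  ⨆ ω : Fin d → ℤ, fA d l R K ω q

lemma isClosed_smul_body (hKc : IsCompact K) : IsClosed (l • K) := by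
  have h : IsCompact ((fun x : Ed d => l • x) '' K) :=
    hKc.image (continuous_id.const_smul l)
  rw [Set.image_smul] at h
  exact h.isClosed

lemma measurable_fA (hKc : IsCompact K) (ω : Fin d → ℤ) :
    Measurable (fA d l R K ω) := by
  classical
  have hset : MeasurableSet {q : (Mat d × Ed d) × Ed d | Xpt d ω q.1 ∈ l • K} :=
    (isClosed_smul_body hKc).measurableSet.preimage
      (((continuous_Xpt ω).comp continuous_fst).measurable)
  unfold fA
  exact Measurable.ite hset
    (Continuous.measurable (Continuous.inner
      ((continuous_Xpt ω).comp continuous_fst) continuous_snd))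
    measurable_const

lemma measurable_GA (hKc : IsCompact K) : Measurable (GA d l R K) :=
  Measurable.iSup fun ω => measurable_fA hKc ω

/-- On the good event, `GA` computes the support function of `K ∩ L`. -/
lemma GA_eq (hKR : K ⊆ closedBall 0 R) (hl0 : 0 < l)
    {p : Mat d × Ed d}
    (hne : ((l • K) ∩ lat d p.1 p.2).Nonempty) {u : Ed d} (hu : ‖u‖ = 1) :
    GA d l R K (p, u) = suppFn d ((l • K) ∩ lat d p.1 p.2) u := by
  classical
  set S := (l • K) ∩ lat d p.1 p.2 with hSdef
  have hSsub : S ⊆ closedBall 0 (l * R) :=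
    (inter_subset_left).trans (scaled_subset hKR hl0)
  have hlow : ∀ x ∈ S, -(l * R) ≤ ⟪x, u⟫ := by
    intro x hx
    have hb : ‖x‖ ≤ l * R := by simpa [dist_eq_norm] using hSsub hx
    have := real_inner_le_norm (-x) u
    rw [inner_neg_left, norm_neg, hu, mul_one] at this
    linarith
  have hup : ∀ ω : Fin d → ℤ, fA d l R K ω (p, u) ≤ suppFn d S u := by
    intro ω
    unfold fA
    by_cases hmem : Xpt d ω (p, u).1 ∈ l • K
    · rw [if_pos hmem]
      exact le_suppFn hSsub ⟨hmem, Xpt_mem_lat ω p⟩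
    · rw [if_neg hmem]
      obtain ⟨x, hx⟩ := hne
      exact le_trans (hlow x hx) (le_suppFn hSsub hx)
  have hbdd : BddAbove (Set.range fun ω => fA d l R K ω (p, u)) := by
    refine ⟨suppFn d S u, ?_⟩
    rintro - ⟨ω, rfl⟩
    exact hup ω
  apply le_antisymm
  · exact ciSup_le hup
  · apply suppFn_le hne
    intro x hx
    obtain ⟨ω, hω⟩ := hx.2
    have hfx : fA d l R K ω (p, u) = ⟪x, u⟫ := by
      unfold fA
      rw [show Xpt d ω (p, u).1 = x from hω.symm, if_pos (hω ▸ hx.1)]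
    calc ⟪x, u⟫ = fA d l R K ω (p, u) := hfx.symm
      _ ≤ GA d l R K (p, u) := le_ciSup hbdd ω

lemma stronglyMeasurable_PhiA (hKc : IsCompact K) (l R : ℝ) :
    StronglyMeasurable (fun p : Mat d × Ed d =>
      ∫ u : sphere (0 : Ed d) 1, GA d l R K (p, ↑u) ∂(sphereμ d)) := by
  have h1 : Measurable (fun q : (Mat d × Ed d) × sphere (0 : Ed d) 1 =>
      GA d l R K (q.1, ↑q.2)) :=
    (measurable_GA hKc).comp
      (measurable_fst.prodMk (measurable_subtype_coe.comp measurable_snd))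
  exact h1.stronglyMeasurable.integral_prod_right'

end Meas
section Final
variable {d : ℕ} {K : Set (Ed d)} {x₀ : Ed d} {R r l : ℝ} {μ : Measure (Mat d)}

lemma volume_cube (d : ℕ) : volume (cube d) = 1 := by
  have hcube : cube d = (MeasurableEquiv.toLp 2 (Fin d → ℝ)).symm ⁻¹'
      (Set.univ.pi fun _ => Ico (0:ℝ) 1) := by
    ext t
    simp [cube, Set.mem_pi]
  rw [hcube, (EuclideanSpace.volume_preserving_symm_measurableEquiv_toLp (Fin d)).measure_preimage
    ((MeasurableSet.univ_pi fun _ => measurableSet_Ico).nullMeasurableSet)]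
  rw [volume_pi_pi]
  simp [Real.volume_Ico]

lemma isProbability_latticeParam (hμ : IsHaarSO d μ) :
    IsProbabilityMeasure (latticeParamMeasure d μ) := by
  constructor
  have : (univ : Set (Mat d × Ed d)) = univ ×ˢ univ := by simp
  rw [latticeParamMeasure, this, Measure.prod_prod]
  haveI := hμ.1
  rw [measure_univ, Measure.restrict_apply_univ, volume_cube, one_mul]

lemma ae_SOd (hμ : IsHaarSO d μ) :
    ∀ᵐ p ∂(latticeParamMeasure d μ), p.1 ∈ SOd d := by
  rw [ae_iff]
  have h1 : {p : Mat d × Ed d | ¬ p.1 ∈ SOd d} = (SOd d)ᶜ ×ˢ univ := by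
    ext p; simp [Set.mem_prod]
  rw [h1, latticeParamMeasure, Measure.prod_prod, hμ.2.1, zero_mul]

/-- The expectation bound. -/
lemma exp_bound (hd : 2 ≤ d) (hμ : IsHaarSO d μ)
    (hKconv : Convex ℝ K) (hKc : IsCompact K) (hKR : K ⊆ closedBall 0 R)
    (hball : closedBall x₀ r ⊆ K) (hr : 0 < r) (hR : 0 < R)
    (hl : Real.sqrt d / r ≤ l) :
    meanWidth d (l • K) - expMeanWidthHull d μ (l • K)
      ≤ 2 * (Real.sqrt d * R / r + Real.sqrt d / 2) := by
  have hd0 : (0:ℝ) < Real.sqrt d := Real.sqrt_pos.mpr (by positivity)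
  have hl0 : 0 < l := lt_of_lt_of_le (by positivity) hl
  have hω : 0 < ωd d := ωd_pos (by omega)
  set τ := Real.sqrt d * R / r + Real.sqrt d / 2 with hτ
  set P := latticeParamMeasure d μ with hP
  haveI : IsProbabilityMeasure P := isProbability_latticeParam hμ
  set g : Mat d × Ed d → ℝ :=
    fun p => meanWidth d (convexHull ℝ ((l • K) ∩ lat d p.1 p.2)) with hg
  set Φ : Mat d × Ed d → ℝ := fun p =>
    (2 / ωd d) * ∫ u : sphere (0 : Ed d) 1, GA d l R K (p, ↑u) ∂(sphereμ d)
    with hΦ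
  have haeSO : ∀ᵐ p ∂P, p.1 ∈ SOd d := ae_SOd hμ
  have hgΦ : ∀ p : Mat d × Ed d, p.1 ∈ SOd d → g p = Φ p := by
    intro p hp
    have hne : ((l • K) ∩ lat d p.1 p.2).Nonempty :=
      lat_inter_nonempty hd hp p.2 hball hr hl
    have hSsub : ((l • K) ∩ lat d p.1 p.2) ⊆ closedBall 0 (l * R) :=
      (inter_subset_left).trans (scaled_subset hKR hl0)
    rw [hg, hΦ]
    simp only
    rw [meanWidth_convexHull hne hSsub, meanWidth]
    congr 1
    apply integral_congr_ae
    apply ae_of_all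
    intro u
    exact (GA_eq hKR hl0 hne (mem_sphere_zero_iff_norm.mp u.2)).symm
  have haes : g =ᵐ[P] Φ := haeSO.mono hgΦ
  have hΦm : Measurable Φ :=
    measurable_const.mul (stronglyMeasurable_PhiA hKc l R).measurable
  have haesm : AEStronglyMeasurable g P :=
    hΦm.aestronglyMeasurable.congr haes.symm
  have hbd : ∀ᵐ p ∂P, ‖g p‖ ≤ 2 * (l * R) := by
    apply haeSO.mono
    intro p hp
    have hne : ((l • K) ∩ lat d p.1 p.2).Nonempty :=
      lat_inter_nonempty hd hp p.2 hball hr hl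
    have hSsub : ((l • K) ∩ lat d p.1 p.2) ⊆ closedBall 0 (l * R) :=
      (inter_subset_left).trans (scaled_subset hKR hl0)
    have hgp : g p = (2 / ωd d) *
        ∫ u : sphere (0 : Ed d) 1,
          suppFn d ((l • K) ∩ lat d p.1 p.2) ↑u ∂(sphereμ d) := by
      rw [hg]; simp only
      rw [meanWidth_convexHull hne hSsub, meanWidth]
    have hnormint : ‖∫ u : sphere (0 : Ed d) 1,
        suppFn d ((l • K) ∩ lat d p.1 p.2) ↑u ∂(sphereμ d)‖
        ≤ (l * R) * (sphereμ d univ).toReal := by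
      apply norm_integral_le_of_norm_le_const
      apply ae_of_all
      intro u
      exact suppFn_abs_le hne hSsub (mem_sphere_zero_iff_norm.mp u.2)
    rw [hgp, Real.norm_eq_abs, abs_mul, abs_of_pos (by positivity : (0:ℝ) < 2 / ωd d)]
    have hωeq : (sphereμ d univ).toReal = ωd d := rfl
    rw [hωeq] at hnormint
    calc (2 / ωd d) * |∫ u : sphere (0 : Ed d) 1,
          suppFn d ((l • K) ∩ lat d p.1 p.2) ↑u ∂(sphereμ d)|
        ≤ (2 / ωd d) * ((l * R) * ωd d) := by
          apply mul_le_mul_of_nonneg_left _ (by positivity)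
          rw [← Real.norm_eq_abs]
          exact hnormint
      _ = 2 * (l * R) := by field_simp
  have hint : Integrable g P :=
    Integrable.mono' (integrable_const (2 * (l * R))) haesm hbd
  have hlb : ∀ᵐ p ∂P, meanWidth d (l • K) - 2 * τ ≤ g p := by
    apply haeSO.mono
    intro p hp
    have := meanWidth_diff hd hp p.2 hKconv hKR hball hr hR hl
    rw [← hτ] at this
    rw [hg]; simp only
    linarith
  have hmono := integral_mono_ae (integrable_const (meanWidth d (l • K) - 2 * τ))
    hint hlb
  rw [integral_const, probReal_univ, one_smul] at hmono
  have hexp : expMeanWidthHull d μ (l • K) = ∫ p, g p ∂P := rfl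
  rw [hexp]
  linarith

theorem mean_width_difference_le_two_tau' (d : ℕ) (hd : 2 ≤ d)
    (K : Set (Ed d)) (hK : IsConvexBody d K) :
    ∃ τ lam₀ : ℝ, 0 < τ ∧ 0 < lam₀ ∧
      (∀ μ : Measure (Mat d), IsHaarSO d μ →
        ∀ l : ℝ, lam₀ ≤ l →
          meanWidth d (l • K) - expMeanWidthHull d μ (l • K) ≤ 2 * τ) ∧
      (∀ l : ℝ, lam₀ ≤ l →
        ∀ ρ ∈ SOd d, ∀ s : Ed d,
          meanWidth d (l • K) -
              meanWidth d (convexHull ℝ ((l • K) ∩ lat d ρ s)) ≤ 2 * τ) := by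
  obtain ⟨hKc, hKconv, x₀, hx₀⟩ := hK
  obtain ⟨ε, hε, hballε⟩ := Metric.mem_nhds_iff.mp (mem_interior_iff_mem_nhds.mp hx₀)
  have hball : closedBall x₀ (ε / 2) ⊆ K :=
    (closedBall_subset_ball (by linarith)).trans hballε
  obtain ⟨R₀, hR₀⟩ := hKc.isBounded.subset_closedBall 0
  have hKR : K ⊆ closedBall 0 (max R₀ 1) :=
    hR₀.trans (closedBall_subset_closedBall (le_max_left _ _))
  have hR : (0:ℝ) < max R₀ 1 := lt_of_lt_of_le one_pos (le_max_right _ _)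
  have hr : (0:ℝ) < ε / 2 := by linarith
  have hd0 : (0:ℝ) < Real.sqrt d := Real.sqrt_pos.mpr (by positivity)
  refine ⟨Real.sqrt d * (max R₀ 1) / (ε / 2) + Real.sqrt d / 2,
    Real.sqrt d / (ε / 2), by positivity, by positivity, ?_, ?_⟩
  · intro μ hμ l hl
    exact exp_bound hd hμ hKconv hKc hKR hball hr hR hl
  · intro l hl ρ hρ s
    exact meanWidth_diff hd hρ s hKconv hKR hball hr hR hl

end Final
/-- **Theorem (general upper bound).** For a convex body `K ⊆ ℝ^d` there are
`τ(K), λ(K) > 0` such that for `λ ≥ λ(K)`: `W(λK) - E[W((λK)_L)] ≤ 2τ(K)`, and moreover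
`W(λK) - W((λK)_L) ≤ 2τ(K)` for every individual lattice `L = ρ(ℤ^d + s)`. -/
theorem mean_width_difference_le_two_tau (d : ℕ) (hd : 2 ≤ d)
    (K : Set (Ed d)) (hK : IsConvexBody d K) :
    ∃ τ lam₀ : ℝ, 0 < τ ∧ 0 < lam₀ ∧
      (∀ μ : Measure (Mat d), IsHaarSO d μ →
        ∀ l : ℝ, lam₀ ≤ l →
          meanWidth d (l • K) - expMeanWidthHull d μ (l • K) ≤ 2 * τ) ∧
      (∀ l : ℝ, lam₀ ≤ l →
        ∀ ρ ∈ SOd d, ∀ s : Ed d,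
          meanWidth d (l • K) -
              meanWidth d (convexHull ℝ ((l • K) ∩ lat d ρ s)) ≤ 2 * τ) := by
  exact mean_width_difference_le_two_tau' d hd K hK


end
end

section
/- Let K ⊂ ℝ^d be a convex body. Then there exist a measurable set Σ ⊂ S^{d−1} of positive spherical Lebesgue measure and a radius R > 0, both depending on K, such that for every u ∈ Σ there is a boundary point p ∈ ∂K with K ⊂ p + R(B^d − u), i.e., K is contained in a ball of radius R touching K at p with outer normal direction u. -/
/- Setting: `ℝ^d` with randomized integer lattices `ρ(ℤ^d + t)`, `ρ ∈ SO(d)` Haar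
distributed, `t` uniform on `[0,1)^d`. -/

open MeasureTheory Metric Set Matrix Filter
open scoped Pointwise RealInnerProductSpace ENNReal NNReal

noncomputable section

/-- An expanding map does not decrease volume (outer measure). -/
lemma volume_le_volume_image_of_expanding {d : ℕ} (s : Ed d → Ed d) (A : Set (Ed d))
    (hs : ∀ z₁ z₂ : Ed d, ‖z₁ - z₂‖ ≤ ‖s z₁ - s z₂‖) :
    volume A ≤ volume (s '' A) := by
  classical
  have hinj : Function.Injective s := by
    intro a b hab
    have h := hs a b
    rw [hab, sub_self, norm_zero] at h
    exact sub_eq_zero.1 (norm_le_zero_iff.1 h)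
  set f : Ed d → Ed d := fun v => if h : ∃ z ∈ A, s z = v then h.choose else 0 with hf
  have hfspec : ∀ v ∈ s '' A, f v ∈ A ∧ s (f v) = v := by
    rintro v ⟨z, hz, rfl⟩
    have h : ∃ z' ∈ A, s z' = s z := ⟨z, hz, rfl⟩
    simp only [hf, dif_pos h]
    exact ⟨h.choose_spec.1, h.choose_spec.2⟩
  have himg : f '' (s '' A) = A := by
    apply Subset.antisymm
    · rintro - ⟨v, hv, rfl⟩
      exact (hfspec v hv).1
    · intro z hz
      refine ⟨s z, mem_image_of_mem _ hz, ?_⟩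
      have h := hfspec (s z) (mem_image_of_mem _ hz)
      exact hinj h.2
  have hlip : LipschitzOnWith 1 f (s '' A) := by
    rw [lipschitzOnWith_iff_dist_le_mul]
    intro x hx y hy
    have h1 := hfspec x hx
    have h2 := hfspec y hy
    have := hs (f x) (f y)
    rw [h1.2, h2.2] at this
    simpa [dist_eq_norm] using this
  set ν : Measure (Ed d) := μH[(Module.finrank ℝ (Ed d) : ℝ)] with hν
  have hH : ν A ≤ ν (s '' A) := by
    calc ν A = ν (f '' (s '' A)) := by rw [himg]
    _ ≤ (1 : ℝ≥0) ^ (Module.finrank ℝ (Ed d) : ℝ) * ν (s '' A) :=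
        hlip.hausdorffMeasure_image_le (by positivity) 
    _ = ν (s '' A) := by simp
  have hvol : (volume : Measure (Ed d)) = Measure.addHaarScalarFactor volume ν • ν :=
    Measure.isAddLeftInvariant_eq_smul _ _
  rw [hvol]
  simp only [Measure.smul_apply, smul_eq_mul]
  exact mul_le_mul_right hH _

/-- **Lemma (dual rolling ball).** For a convex body `K ⊆ ℝ^d` there are a measurable set
`Σ ⊆ S^{d-1}` of positive spherical measure and `R > 0` such that every `u ∈ Σ` admits a
boundary point `p ∈ ∂K` with `K ⊆ p + R(B^d - u)`. -/
theorem dual_rolling_ball (d : ℕ) (hd : 2 ≤ d)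
    (K : Set (Ed d)) (hK : IsConvexBody d K) :
    ∃ Sig : Set (sphere (0 : Ed d) 1), MeasurableSet Sig ∧ 0 < sphereμ d Sig ∧
      ∃ R : ℝ, 0 < R ∧
        ∀ u ∈ Sig, ∃ p ∈ frontier K, K ⊆ closedBall (p - R • (u : Ed d)) R := by
  classical
  obtain ⟨hKc, -, hKint⟩ := hK
  have hKne : K.Nonempty := hKint.mono interior_subset
  obtain ⟨q, hqK, hq⟩ := hKc.exists_isMaxOn hKne continuous_norm.continuousOn
  have hqmax : ∀ x ∈ K, ‖x‖ ≤ ‖q‖ := fun x hx => hq hx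
  set r : ℝ := ‖q‖ with hr_def
  -- the maximal norm is positive
  have hr0 : 0 < r := by
    obtain ⟨c, hc⟩ := hKint
    obtain ⟨ε, hε, hball⟩ := Metric.mem_nhds_iff.1 (mem_interior_iff_mem_nhds.1 hc)
    set e : Ed d := EuclideanSpace.single (⟨0, by omega⟩ : Fin d) (1 : ℝ) with he
    have hen : ‖e‖ = 1 := by simp [he]
    have hc2 : c + (ε / 2) • e ∈ K := by
      apply hball
      simp only [mem_ball, dist_eq_norm, add_sub_cancel_left, norm_smul, hen]
      rw [Real.norm_eq_abs, abs_of_pos (by linarith)]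
      linarith
    have h1 : ‖c‖ ≤ r := hqmax c (hball (mem_ball_self hε))
    have h2 : ‖c + (ε / 2) • e‖ ≤ r := hqmax _ hc2
    have h3 : ε / 2 = ‖(c + (ε / 2) • e) - c‖ := by
      simp only [add_sub_cancel_left, norm_smul, hen, Real.norm_eq_abs, mul_one]
      rw [abs_div, abs_of_pos hε]
      norm_num
    have h4 : ‖(c + (ε / 2) • e) - c‖ ≤ ‖c + (ε / 2) • e‖ + ‖c‖ := norm_sub_le _ _
    linarith
  set R : ℝ := 2 * r with hR_def
  -- the candidate set of directions
  set Sig : Set (sphere (0 : Ed d) 1) :=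
    {u | ∃ p ∈ frontier K, K ⊆ closedBall (p - R • (u : Ed d)) R} with hSig_def
  -- measurability of Sig
  have hFc : IsCompact (frontier K) :=
    hKc.of_isClosed_subset isClosed_frontier hKc.isClosed.frontier_subset
  set T : Set (Ed d × sphere (0 : Ed d) 1) :=
    {pu | pu.1 ∈ frontier K ∧ K ⊆ closedBall (pu.1 - R • (pu.2 : Ed d)) R} with hT_def
  have hTclosed : IsClosed T := by
    have : T = (Prod.fst ⁻¹' frontier K) ∩
        ⋂ x ∈ K, {pu : Ed d × sphere (0 : Ed d) 1 |
          dist x (pu.1 - R • (pu.2 : Ed d)) ≤ R} := by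
      ext pu
      simp only [hT_def, mem_setOf_eq, mem_inter_iff, mem_preimage, mem_iInter, subset_def,
        mem_closedBall]
    rw [this]
    refine (isClosed_frontier.preimage continuous_fst).inter (isClosed_biInter fun x hx => ?_)
    exact isClosed_le (continuous_const.dist ((continuous_fst).sub
      ((continuous_subtype_val.comp continuous_snd).const_smul R))) continuous_const
  have hTcompact : IsCompact T := by
    refine (hFc.prod isCompact_univ).of_isClosed_subset hTclosed ?_
    intro pu hpu
    exact ⟨hpu.1, mem_univ _⟩
  have hSig_eq : Sig = Prod.snd '' T := by
    ext u
    constructor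
    · rintro ⟨p, hp, hsub⟩
      exact ⟨(p, u), ⟨hp, hsub⟩, rfl⟩
    · rintro ⟨⟨p, u'⟩, ⟨hp, hsub⟩, rfl⟩
      exact ⟨p, hp, hsub⟩
  have hmeas : MeasurableSet Sig := by
    rw [hSig_eq]
    exact (hTcompact.image continuous_snd).isClosed.measurableSet
  -- farthest point selection
  have hsel : ∀ z : Ed d, ∃ p, p ∈ K ∧ ∀ x ∈ K, ‖x - z‖ ≤ ‖p - z‖ := by
    intro z
    obtain ⟨p, hpK, hp⟩ := hKc.exists_isMaxOn hKne
      ((continuous_id.sub continuous_const).norm.continuousOn)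
    exact ⟨p, hpK, fun x hx => hp hx⟩
  choose p hpK hpmax using hsel
  set s : Ed d → Ed d := fun z => p z - z with hs_def
  -- the farthest point displacement map is expanding
  have hexp : ∀ z₁ z₂ : Ed d, ‖z₁ - z₂‖ ≤ ‖s z₁ - s z₂‖ := by
    intro z₁ z₂
    rcases eq_or_ne z₁ z₂ with rfl | hne
    · simp
    have h1 : ‖p z₁ - z₂‖ ^ 2 ≤ ‖p z₂ - z₂‖ ^ 2 :=
      pow_le_pow_left₀ (norm_nonneg _) (hpmax z₂ (p z₁) (hpK z₁)) 2
    have h2 : ‖p z₂ - z₁‖ ^ 2 ≤ ‖p z₁ - z₁‖ ^ 2 :=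
      pow_le_pow_left₀ (norm_nonneg _) (hpmax z₁ (p z₂) (hpK z₂)) 2
    have e1 : ‖p z₁ - z₂‖ ^ 2
        = ‖p z₁ - z₁‖ ^ 2 + 2 * ⟪p z₁ - z₁, z₁ - z₂⟫ + ‖z₁ - z₂‖ ^ 2 := by
      have h := norm_add_sq_real (p z₁ - z₁) (z₁ - z₂)
      rw [show (p z₁ - z₁) + (z₁ - z₂) = p z₁ - z₂ by abel] at h
      linarith
    have e2 : ‖p z₂ - z₁‖ ^ 2
        = ‖p z₂ - z₂‖ ^ 2 + 2 * ⟪p z₂ - z₂, z₂ - z₁⟫ + ‖z₂ - z₁‖ ^ 2 := by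
      have h := norm_add_sq_real (p z₂ - z₂) (z₂ - z₁)
      rw [show (p z₂ - z₂) + (z₂ - z₁) = p z₂ - z₁ by abel] at h
      linarith
    have hflip : ⟪p z₂ - z₂, z₂ - z₁⟫ = -⟪p z₂ - z₂, z₁ - z₂⟫ := by
      rw [show z₂ - z₁ = -(z₁ - z₂) by abel, inner_neg_right]
    have hns : ‖z₂ - z₁‖ = ‖z₁ - z₂‖ := norm_sub_rev _ _
    have hsub : ⟪s z₂ - s z₁, z₁ - z₂⟫
        = ⟪p z₂ - z₂, z₁ - z₂⟫ - ⟪p z₁ - z₁, z₁ - z₂⟫ := by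
      simp only [hs_def]
      rw [show (p z₂ - z₂) - (p z₁ - z₁) = (p z₂ - z₂) - (p z₁ - z₁) from rfl]
      exact inner_sub_left _ _ _
    rw [hflip, hns] at e2
    have key : ‖z₁ - z₂‖ ^ 2 ≤ ⟪s z₂ - s z₁, z₁ - z₂⟫ := by
      rw [hsub]; linarith
    have hinle : ⟪s z₂ - s z₁, z₁ - z₂⟫ ≤ ‖s z₂ - s z₁‖ * ‖z₁ - z₂‖ := real_inner_le_norm _ _
    have hzpos : 0 < ‖z₁ - z₂‖ := norm_pos_iff.2 (sub_ne_zero.2 hne)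
    have : ‖z₁ - z₂‖ ≤ ‖s z₂ - s z₁‖ := by
      nlinarith
    rwa [norm_sub_rev (s z₂) (s z₁)] at this
  -- lower and upper bounds for the farthest distance from small-ball centers
  have hg_lb : ∀ z : Ed d, ‖z‖ < r / 2 → r / 2 ≤ ‖s z‖ := by
    intro z hz
    have h1 := hpmax z q hqK
    have h2 : r - ‖z‖ ≤ ‖q - z‖ := by
      have := norm_sub_norm_le q z
      linarith
    simp only [hs_def]
    linarith
  have hg0 : ∀ z : Ed d, ‖z‖ < r / 2 → 0 < ‖s z‖ :=
    fun z hz => lt_of_lt_of_le (by linarith) (hg_lb z hz)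
  have hg_ub : ∀ z : Ed d, ‖z‖ < r / 2 → ‖s z‖ ≤ R := by
    intro z hz
    simp only [hs_def]
    have h1 : ‖p z‖ ≤ r := hqmax _ (hpK z)
    have h2 := norm_sub_le (p z) z
    rw [hR_def]; linarith
  -- every direction arising from a small-ball center lies in Sig
  have hu_mem : ∀ z : Ed d, ‖z‖ < r / 2 →
      ∃ hu1 : ‖s z‖⁻¹ • s z ∈ sphere (0 : Ed d) 1,
        (⟨‖s z‖⁻¹ • s z, hu1⟩ : sphere (0 : Ed d) 1) ∈ Sig := by
    intro z hz
    have hg : 0 < ‖s z‖ := hg0 z hz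
    have hw0 : s z ≠ 0 := norm_pos_iff.1 hg
    set g : ℝ := ‖s z‖ with hg_def
    set u : Ed d := g⁻¹ • s z with hu_def
    have hun : ‖u‖ = 1 := norm_smul_inv_norm hw0
    have hu1 : u ∈ sphere (0 : Ed d) 1 := by
      simpa [mem_sphere_iff_norm] using hun
    have hgu : g • u = s z := smul_inv_smul₀ (ne_of_gt hg) _
    have hpz : p z = z + g • u := by
      rw [hgu]; simp only [hs_def]; abel
    have hsub : K ⊆ closedBall (p z - R • u) R := by
      intro x hx
      have hxz : ‖x - z‖ ≤ g := hpmax z x hx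
      have hRg : g ≤ R := hg_ub z hz
      have hvec : x - (p z - R • u) = (x - z) + (R - g) • u := by
        rw [hpz, sub_smul]; abel
      rw [mem_closedBall, dist_eq_norm, hvec]
      calc ‖(x - z) + (R - g) • u‖ ≤ ‖x - z‖ + ‖(R - g) • u‖ := norm_add_le _ _
        _ = ‖x - z‖ + (R - g) := by
            rw [norm_smul, hun, Real.norm_eq_abs, abs_of_nonneg (by linarith), mul_one]
        _ ≤ R := by linarith
    have hpf : p z ∈ frontier K := by
      rw [hKc.isClosed.frontier_eq]
      refine ⟨hpK z, fun hint => ?_⟩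
      obtain ⟨ε, hε, hball⟩ := Metric.mem_nhds_iff.1 (mem_interior_iff_mem_nhds.1 hint)
      have hxK : p z + (ε / 2) • u ∈ K := by
        apply hball
        simp only [mem_ball, dist_eq_norm, add_sub_cancel_left, norm_smul, hun, mul_one,
          Real.norm_eq_abs]
        rw [abs_of_pos (by linarith)]
        linarith
      have hle := hpmax z _ hxK
      have hveq : (p z + (ε / 2) • u) - z = (g + ε / 2) • u := by
        rw [hpz, add_smul]; abel
      rw [hveq, norm_smul, hun, mul_one, Real.norm_eq_abs,
        abs_of_pos (by linarith)] at hle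
      linarith
    exact ⟨hu1, ⟨p z, hpf, hsub⟩⟩
  -- measure estimates
  have hA : volume (ball (0 : Ed d) (r / 2)) ≤ volume (s '' ball 0 (r / 2)) :=
    volume_le_volume_image_of_expanding s _ hexp
  have hBpos : 0 < volume (s '' ball (0 : Ed d) (r / 2)) :=
    lt_of_lt_of_le (measure_ball_pos _ _ (by linarith)) hA
  have hcone : (4 * r)⁻¹ • (s '' ball (0 : Ed d) (r / 2)) ⊆
      Ioo (0 : ℝ) 1 • ((↑) '' Sig : Set (Ed d)) := by
    intro y hy
    obtain ⟨v, hv, rfl⟩ := Set.mem_smul_set.1 hy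
    obtain ⟨z, hz, rfl⟩ := hv
    rw [mem_ball, dist_zero_right] at hz
    obtain ⟨hu1, huSig⟩ := hu_mem z hz
    have hg : 0 < ‖s z‖ := hg0 z hz
    refine Set.mem_smul.2 ⟨‖s z‖ / (4 * r), ⟨by positivity, ?_⟩, ‖s z‖⁻¹ • s z,
      ⟨(⟨‖s z‖⁻¹ • s z, hu1⟩ : sphere (0 : Ed d) 1), huSig, rfl⟩, ?_⟩
    · have h2 := hg_ub z hz
      rw [hR_def] at h2
      rw [div_lt_one (by linarith)]
      linarith
    · rw [smul_smul]
      congr 1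
      field_simp
  have hcv : 0 < volume ((4 * r)⁻¹ • (s '' ball (0 : Ed d) (r / 2))) := by
    rw [Measure.addHaar_smul]
    refine ENNReal.mul_pos ?_ hBpos.ne'
    simp only [ne_eq, ENNReal.ofReal_eq_zero, not_le]
    have h4r : (0:ℝ) < (4 * r)⁻¹ := by positivity
    have := pow_pos h4r (Module.finrank ℝ (Ed d))
    rw [abs_of_pos this]
    exact this
  have hpos2 : 0 < volume (Ioo (0 : ℝ) 1 • ((↑) '' Sig : Set (Ed d))) :=
    lt_of_lt_of_le hcv (measure_mono hcone)
  have hσ : 0 < sphereμ d Sig := by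
    have heq : sphereμ d Sig
        = (Module.finrank ℝ (Ed d)) * volume (Ioo (0 : ℝ) 1 • ((↑) '' Sig : Set (Ed d))) :=
      Measure.toSphere_apply' _ hmeas
    rw [heq]
    refine ENNReal.mul_pos ?_ hpos2.ne'
    have hfr : Module.finrank ℝ (Ed d) = d := finrank_euclideanSpace_fin
    rw [hfr]
    exact_mod_cast Nat.cast_ne_zero.2 (by omega)
  exact ⟨Sig, hmeas, hσ, R, by rw [hR_def]; linarith, fun u hu => hu⟩

end
end

section
/- For every t with 0 ≤ t ≤ 1 and every unit vector u ∈ S^{d−1}, the volume of the cap of width t of the unit ball satisfies (1/d) κ_{d−1} t^{(d+1)/2} ≤ V_d( B^d_{t,u} ) ≤ 2^{(d−1)/2} κ_{d−1} t^{(d+1)/2}, where κ_{d−1} is the volume of the (d−1)-dimensional unit ball. -/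
/- Setting: `ℝ^d` with randomized integer lattices `ρ(ℤ^d + t)`, `ρ ∈ SO(d)` Haar
distributed, `t` uniform on `[0,1)^d`. -/

open MeasureTheory Metric Set Matrix Filter
open scoped Pointwise RealInnerProductSpace ENNReal NNReal

noncomputable section

/-- `κ_n`, the volume of the `n`-dimensional unit ball. -/
def kappa (n : ℕ) : ℝ := (volume (ball (0 : EuclideanSpace ℝ (Fin n)) 1)).toReal


lemma exists_onb (n : ℕ) (u : Ed (n+1)) (hu : ‖u‖ = 1) :
    ∃ b : OrthonormalBasis (Fin (n+1)) ℝ (Ed (n+1)), b 0 = u := by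
  have hcard : Module.finrank ℝ (Ed (n+1)) = Fintype.card (Fin (n+1)) := by
    simp [finrank_euclideanSpace_fin]
  have hv : Orthonormal ℝ (({0} : Set (Fin (n+1))).restrict (fun _ => u)) := by
    constructor
    · intro i; exact hu
    · intro i j hij
      exact absurd (Subsingleton.elim i j) hij
  obtain ⟨b, hb⟩ := hv.exists_orthonormalBasis_extension_of_card_eq hcard
  exact ⟨b, hb 0 rfl⟩

lemma volume_cap_eq (n : ℕ) (t : ℝ) (u : Ed (n+1)) (hu : ‖u‖ = 1) :
    (volume (({x ∈ closedBall (0 : Ed (n+1)) 1 | 1 - t ≤ ⟪x, u⟫}) : Set (Ed (n+1)))) =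
      (volume : Measure (ℝ × Ed n)) {p | p.1^2 + ‖p.2‖^2 ≤ 1 ∧ 1 - t ≤ p.1} := by
  obtain ⟨b, hb⟩ := exists_onb n u hu
  set F : Ed (n+1) → ℝ × Ed n := fun x =>
    (Prod.map id ((MeasurableEquiv.toLp 2 (Fin n → ℝ)).symm.symm)
      ((MeasurableEquiv.piFinSuccAbove (fun _ => ℝ) 0)
        ((MeasurableEquiv.toLp 2 (Fin (n+1) → ℝ)).symm (b.repr x)))) with hF
  have hmp : MeasurePreserving F volume volume := by
    have h1 := b.measurePreserving_repr
    have h2 := EuclideanSpace.volume_preserving_symm_measurableEquiv_toLp (Fin (n+1))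
    have h3 := measurePreserving_piFinSuccAbove (fun _ : Fin (n+1) => (volume : Measure ℝ)) 0
    have h4 := (MeasurePreserving.id (volume : Measure ℝ)).prod
      (EuclideanSpace.volume_preserving_symm_measurableEquiv_toLp (Fin n)).symm
    rw [← volume_pi] at h3
    rw [← Measure.volume_eq_prod] at h4
    have h5 : ((volume : Measure ℝ).prod (Measure.pi fun _ : Fin n => (volume : Measure ℝ)))
        = (volume : Measure (ℝ × (Fin n → ℝ))) := by
      rw [← volume_pi, ← Measure.volume_eq_prod]
    rw [h5] at h3
    exact (h4.comp h3).comp (h2.comp h1)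
  have key : ∀ x : Ed (n+1), ((F x).1 = ⟪x, u⟫) ∧ ((F x).1^2 + ‖(F x).2‖^2 = ‖x‖^2) := by
    intro x
    have hF1 : (F x).1 = b.repr x 0 := rfl
    have hF2 : ∀ j : Fin n, (F x).2 j = b.repr x (Fin.succ j) := by
      intro j
      simp [hF, MeasurableEquiv.piFinSuccAbove, Fin.removeNth, Fin.zero_succAbove]
      rfl
    constructor
    · rw [hF1, b.repr_apply_apply, hb, real_inner_comm]
    · have hx : ‖x‖^2 = ∑ i, (b.repr x i)^2 := by
        rw [← b.repr.norm_map x, EuclideanSpace.norm_eq, Real.sq_sqrt (by positivity)]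
        simp [Real.norm_eq_abs, sq_abs]
      have hy : ‖(F x).2‖^2 = ∑ j, (b.repr x (Fin.succ j))^2 := by
        rw [EuclideanSpace.norm_eq, Real.sq_sqrt (by positivity)]
        simp [hF2, Real.norm_eq_abs, sq_abs]
      rw [hx, hy, hF1, Fin.sum_univ_succ]
  have hS : MeasurableSet {p : ℝ × Ed n | p.1^2 + ‖p.2‖^2 ≤ 1 ∧ 1 - t ≤ p.1} := by
    refine IsClosed.measurableSet (IsClosed.inter ?_ ?_)
    · exact isClosed_le ((continuous_fst.pow 2).add (continuous_snd.norm.pow 2)) continuous_const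
    · exact isClosed_le continuous_const continuous_fst
  have hpre : ({x ∈ closedBall (0 : Ed (n+1)) 1 | 1 - t ≤ ⟪x, u⟫}) =
      F ⁻¹' {p : ℝ × Ed n | p.1^2 + ‖p.2‖^2 ≤ 1 ∧ 1 - t ≤ p.1} := by
    ext x
    obtain ⟨h1, h2⟩ := key x
    have h2' : (⟪x, u⟫ : ℝ)^2 + ‖(F x).2‖^2 = ‖x‖^2 := h1 ▸ h2
    simp only [mem_setOf_eq, mem_preimage, mem_closedBall, dist_zero_right, h1]
    constructor
    · rintro ⟨ha, hb'⟩
      exact ⟨by nlinarith [norm_nonneg x], hb'⟩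
    · rintro ⟨ha, hb'⟩
      exact ⟨by nlinarith [norm_nonneg x], hb'⟩
  rw [hpre, hmp.measure_preimage hS.nullMeasurableSet]

lemma cone_volume (n : ℕ) (t : ℝ) (ht0 : 0 < t) (ht1 : t ≤ 1) :
    (volume : Measure (ℝ × Ed n)) {p | 1 - t ≤ p.1 ∧ p.1 ≤ 1 ∧ ‖p.2‖ ≤ (1 - p.1) / Real.sqrt t}
      = ENNReal.ofReal (t^(n+1)/(n+1) / (Real.sqrt t)^n) * volume (ball (0 : Ed n) 1) := by
  have hst : 0 < Real.sqrt t := Real.sqrt_pos.mpr ht0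
  have hC : MeasurableSet {p : ℝ × Ed n | 1 - t ≤ p.1 ∧ p.1 ≤ 1 ∧ ‖p.2‖ ≤ (1 - p.1) / Real.sqrt t} := by
    refine IsClosed.measurableSet (IsClosed.inter ?_ (IsClosed.inter ?_ ?_))
    · exact isClosed_le continuous_const continuous_fst
    · exact isClosed_le continuous_fst continuous_const
    · exact isClosed_le continuous_snd.norm (by fun_prop)
  rw [Measure.volume_eq_prod, Measure.prod_apply hC]
  have hslice : ∀ s : ℝ, volume (Prod.mk s ⁻¹' {p : ℝ × Ed n | 1 - t ≤ p.1 ∧ p.1 ≤ 1 ∧ ‖p.2‖ ≤ (1 - p.1) / Real.sqrt t})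
      = Set.indicator (Icc (1-t) 1)
          (fun s => ENNReal.ofReal (((1-s)/Real.sqrt t)^n) * volume (ball (0 : Ed n) 1)) s := by
    intro s
    by_cases hs : s ∈ Icc (1-t) 1
    · have he : Prod.mk s ⁻¹' {p : ℝ × Ed n | 1 - t ≤ p.1 ∧ p.1 ≤ 1 ∧ ‖p.2‖ ≤ (1 - p.1) / Real.sqrt t}
          = closedBall (0 : Ed n) ((1-s)/Real.sqrt t) := by
        ext y
        simp only [mem_preimage, mem_setOf_eq, mem_closedBall, dist_zero_right]
        exact ⟨fun h => h.2.2, fun h => ⟨hs.1, hs.2, h⟩⟩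
      rw [he, indicator_of_mem hs,
        Measure.addHaar_closedBall _ _ (div_nonneg (by linarith [hs.2]) hst.le),
        finrank_euclideanSpace_fin]
    · have he : Prod.mk s ⁻¹' {p : ℝ × Ed n | 1 - t ≤ p.1 ∧ p.1 ≤ 1 ∧ ‖p.2‖ ≤ (1 - p.1) / Real.sqrt t}
          = ∅ := by
        ext y
        simp only [mem_preimage, mem_setOf_eq, mem_empty_iff_false, iff_false, not_and]
        intro h1 h2
        exact absurd ⟨h1, h2⟩ hs
      rw [he, indicator_of_notMem hs, measure_empty]
  rw [lintegral_congr hslice, lintegral_indicator measurableSet_Icc,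
    lintegral_mul_const _ (by fun_prop)]
  congr 1
  rw [← ofReal_integral_eq_lintegral_ofReal]
  · congr 1
    rw [integral_Icc_eq_integral_Ioc, ← intervalIntegral.integral_of_le (by linarith)]
    simp_rw [div_pow]
    rw [intervalIntegral.integral_div, intervalIntegral.integral_comp_sub_left (fun x => x^n) 1,
      integral_pow]
    norm_num
  · exact (Continuous.integrableOn_Icc (by fun_prop))
  · filter_upwards [ae_restrict_mem measurableSet_Icc] with s hs
    have : (0:ℝ) ≤ 1 - s := by linarith [hs.2]
    positivity

/-- The cap of width `t` of the ball `B(0,r)` in direction `u`: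
`B(0,r)_{t,u} = {x ∈ B(0,r) : ⟨x,u⟩ ≥ r - t}`. -/
def ballCap (d : ℕ) (r t : ℝ) (u : Ed d) : Set (Ed d) :=
  {x ∈ closedBall (0 : Ed d) r | r - t ≤ ⟪x, u⟫}

/-- **Lemma (unit ball cap volume).** For `0 ≤ t ≤ 1` and unit `u`,
`(1/d) κ_{d-1} t^{(d+1)/2} ≤ V_d(B^d_{t,u}) ≤ 2^{(d-1)/2} κ_{d-1} t^{(d+1)/2}`. -/
theorem unit_ball_cap_volume_bounds (d : ℕ) (hd : 2 ≤ d)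
    (t : ℝ) (ht : t ∈ Icc (0 : ℝ) 1) (u : Ed d) (hu : ‖u‖ = 1) :
    (1 / (d : ℝ)) * kappa (d - 1) * t ^ (((d : ℝ) + 1) / 2) ≤
        (volume (ballCap d 1 t u)).toReal ∧
      (volume (ballCap d 1 t u)).toReal ≤
        (2 : ℝ) ^ (((d : ℝ) - 1) / 2) * kappa (d - 1) * t ^ (((d : ℝ) + 1) / 2) := by
  obtain ⟨n, rfl⟩ : ∃ n, d = n + 1 := ⟨d - 1, by omega⟩
  obtain ⟨ht0, ht1⟩ := ht
  have hvol : volume (ballCap (n+1) 1 t u) =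
      (volume : Measure (ℝ × Ed n)) {p | p.1^2 + ‖p.2‖^2 ≤ 1 ∧ 1 - t ≤ p.1} :=
    volume_cap_eq n t u hu
  set S : Set (ℝ × Ed n) := {p | p.1^2 + ‖p.2‖^2 ≤ 1 ∧ 1 - t ≤ p.1} with hSdef
  set B : ℝ≥0∞ := volume (ball (0 : Ed n) 1) with hB
  have hBlt : B < ⊤ := measure_ball_lt_top
  have hkap : kappa (n + 1 - 1) = B.toReal := by
    simp only [Nat.add_sub_cancel]; rfl
  have hknn : 0 ≤ B.toReal := ENNReal.toReal_nonneg
  -- upper bound via the cylinder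
  have hsub : S ⊆ Icc (1-t) 1 ×ˢ closedBall (0 : Ed n) (Real.sqrt (2*t)) := by
    rintro ⟨a, y⟩ ⟨h1, h2⟩
    have ha1 : a ≤ 1 := by nlinarith [norm_nonneg y, sq_nonneg ‖y‖]
    refine ⟨⟨h2, ha1⟩, ?_⟩
    simp only [mem_closedBall, dist_zero_right]
    rw [Real.le_sqrt (norm_nonneg _) (by linarith)]
    nlinarith
  have hcyl : volume (Icc (1-t) 1 ×ˢ closedBall (0 : Ed n) (Real.sqrt (2*t)))
      = ENNReal.ofReal t * (ENNReal.ofReal (Real.sqrt (2*t) ^ n) * B) := by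
    rw [Measure.volume_eq_prod, Measure.prod_prod, Real.volume_Icc,
      Measure.addHaar_closedBall _ _ (Real.sqrt_nonneg _), finrank_euclideanSpace_fin]
    norm_num
    rfl
  have hcylfin : volume (Icc (1-t) 1 ×ˢ closedBall (0 : Ed n) (Real.sqrt (2*t))) < ⊤ := by
    rw [hcyl]
    exact ENNReal.mul_lt_top ENNReal.ofReal_lt_top
      (ENNReal.mul_lt_top ENNReal.ofReal_lt_top hBlt)
  have hSfin : volume S < ⊤ := lt_of_le_of_lt (measure_mono hsub) hcylfin
  have hupper : (volume (ballCap (n+1) 1 t u)).toReal ≤ t * (Real.sqrt (2*t) ^ n * B.toReal) := by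
    rw [hvol]
    have h1 : volume S ≤ volume (Icc (1-t) 1 ×ˢ closedBall (0 : Ed n) (Real.sqrt (2*t))) :=
      measure_mono hsub
    have h2 := ENNReal.toReal_mono hcylfin.ne h1
    rw [hcyl, ENNReal.toReal_mul, ENNReal.toReal_mul, ENNReal.toReal_ofReal ht0,
      ENNReal.toReal_ofReal (by positivity)] at h2
    exact h2
  have hexp1 : ((↑(n+1) : ℝ) + 1) / 2 = ((n : ℝ) + 2) / 2 := by push_cast; ring
  have hexp2 : ((↑(n+1) : ℝ) - 1) / 2 = (n : ℝ) / 2 := by push_cast; ring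
  constructor
  · -- lower bound
    rcases eq_or_lt_of_le ht0 with h0 | htpos
    · rw [hexp1, ← h0, Real.zero_rpow (by positivity)]
      simpa using ENNReal.toReal_nonneg
    · have hst : 0 < Real.sqrt t := Real.sqrt_pos.mpr htpos
      have hconesub : {p : ℝ × Ed n | 1 - t ≤ p.1 ∧ p.1 ≤ 1 ∧ ‖p.2‖ ≤ (1 - p.1) / Real.sqrt t}
          ⊆ S := by
        rintro ⟨a, y⟩ ⟨h1, h2, h3⟩
        refine ⟨?_, h1⟩
        have h4 : ‖y‖ * Real.sqrt t ≤ 1 - a := (le_div_iff₀ hst).mp h3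
        have hs2 : Real.sqrt t ^ 2 = t := Real.sq_sqrt ht0
        have h0a : (0:ℝ) ≤ a := by linarith
        have h5 : ‖y‖^2 * t ≤ (1-a)^2 := by
          nlinarith [norm_nonneg y, mul_nonneg (norm_nonneg y) hst.le]
        have h6 : (1-a)^2 ≤ t * ((1-a)*(1+a)) := by nlinarith
        have h7 : t * (a^2 + ‖y‖^2) ≤ t * 1 := by nlinarith
        exact le_of_mul_le_mul_left (by linarith) htpos
      have hcv := cone_volume n t htpos ht1
      have hmono := ENNReal.toReal_mono hSfin.ne
        (le_trans (le_of_eq hcv.symm) (measure_mono hconesub))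
      rw [ENNReal.toReal_mul, ENNReal.toReal_ofReal (by positivity)] at hmono
      rw [hvol]
      refine le_trans (le_of_eq ?_) hmono
      rw [hkap, hexp1]
      have hpow : t ^ (n+1) / Real.sqrt t ^ n = t ^ (((n:ℝ) + 2) / 2) := by
        rw [← Real.rpow_natCast t (n+1), ← Real.rpow_natCast (Real.sqrt t) n,
          Real.sqrt_eq_rpow, ← Real.rpow_mul ht0, ← Real.rpow_sub htpos]
        congr 1
        push_cast; ring
      rw [div_div, mul_comm ((n:ℝ)+1) (Real.sqrt t ^ n), ← div_div, hpow]
      push_cast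
      ring
  · -- upper bound
    refine le_trans hupper (le_of_eq ?_)
    rw [hkap, hexp1, hexp2]
    have hpow : Real.sqrt (2*t) ^ n = 2 ^ ((n:ℝ)/2) * t ^ ((n:ℝ)/2) := by
      rw [← Real.rpow_natCast (Real.sqrt (2*t)) n, Real.sqrt_eq_rpow,
        ← Real.rpow_mul (by linarith), ← Real.mul_rpow (by norm_num) ht0]
      congr 1
      ring
    rw [hpow]
    have ht' : t * t ^ ((n:ℝ)/2) = t ^ (((n:ℝ)+2)/2) := by
      nth_rewrite 1 [← Real.rpow_one t]
      rw [← Real.rpow_add' ht0 (by positivity)]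
      congr 1
      ring
    calc t * (2 ^ ((n:ℝ)/2) * t ^ ((n:ℝ)/2) * B.toReal)
        = 2 ^ ((n:ℝ)/2) * B.toReal * (t * t ^ ((n:ℝ)/2)) := by ring
      _ = 2 ^ ((n:ℝ)/2) * B.toReal * t ^ (((n:ℝ)+2)/2) := by rw [ht']
      _ = 2 ^ ((n:ℝ)/2) * B.toReal * t ^ (((n:ℝ)+2)/2) := rfl
    

end
end
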